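/- If u : H → ℝ is bounded and k-semi-convex, then for every 0 < t < k the function T_t u is (k - t)-semi-convex. -/

import Mathlib

noncomputable def infConv {H : Type*} [NormedAddCommGroup H] [InnerProductSpace ℝ H]
    (t : ℝ) (u : H → ℝ) (x : H) : ℝ :=
  if t = 0 then u x else ⨅ y : H, (u y + ‖y - x‖ ^ 2 / t)

private lemma sq_norm_combo {H : Type*} [NormedAddCommGroup H] [InnerProductSpace ℝ H]
    (a b : ℝ) (w w' : H) (ha : 0 ≤ a) (hb : 0 ≤ b) (hab : a + b = 1) :
    ‖a • w + b • w'‖ ^ 2 ≤ a * ‖w‖ ^ 2 + b * ‖w'‖ ^ 2 := by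
  have h : ‖a • w + b • w'‖ ≤ a * ‖w‖ + b * ‖w'‖ := by
    calc ‖a • w + b • w'‖ ≤ ‖a • w‖ + ‖b • w'‖ := norm_add_le _ _
    _ = a * ‖w‖ + b * ‖w'‖ := by
        rw [norm_smul, norm_smul, Real.norm_eq_abs, Real.norm_eq_abs, abs_of_nonneg ha,
          abs_of_nonneg hb]
  nlinarith [norm_nonneg (a • w + b • w'), norm_nonneg w, norm_nonneg w',
    sq_nonneg (‖w‖ - ‖w'‖), mul_nonneg ha hb]

theorem infConv_semiconvex {H : Type*} [NormedAddCommGroup H] [InnerProductSpace ℝ H]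
    (u : H → ℝ) (hu : ∃ C : ℝ, ∀ x, |u x| ≤ C) (k : ℝ)
    (hk : ConvexOn ℝ Set.univ (fun x : H => u x + ‖x‖ ^ 2 / k))
    (t : ℝ) (ht : 0 < t) (htk : t < k) :
    ConvexOn ℝ Set.univ (fun x : H => infConv t u x + ‖x‖ ^ 2 / (k - t)) := by
  obtain ⟨C, hC⟩ := hu
  have ht0 : t ≠ 0 := ht.ne'
  have hk0 : (0:ℝ) < k := ht.trans htk
  have hkt : (0:ℝ) < k - t := sub_pos.2 htk
  set α : ℝ := (k - t) / k with hα
  set c : ℝ := k / (t * (k - t)) with hcdef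
  have hc : 0 ≤ c := by positivity
  have key : ∀ x y : H, u y + ‖y - x‖ ^ 2 / t + ‖x‖ ^ 2 / (k - t)
      = (u y + ‖y‖ ^ 2 / k) + c * ‖α • y - x‖ ^ 2 := by
    intro x y
    have h1 : ‖y - x‖ ^ 2 = ‖y‖ ^ 2 - 2 * inner ℝ y x + ‖x‖ ^ 2 := norm_sub_sq_real y x
    have h2 : ‖α • y - x‖ ^ 2 = α ^ 2 * ‖y‖ ^ 2 - 2 * (α * inner ℝ y x) + ‖x‖ ^ 2 := by
      rw [norm_sub_sq_real, real_inner_smul_left, norm_smul, Real.norm_eq_abs, mul_pow, sq_abs]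
    rw [h1, h2, hα, hcdef]
    field_simp
    ring
  have hbdd : ∀ x : H, BddBelow (Set.range fun y => u y + ‖y - x‖ ^ 2 / t) := by
    intro x
    refine ⟨-C, ?_⟩
    rintro _ ⟨y, rfl⟩
    have h1 : -C ≤ u y := neg_le_of_abs_le (hC y)
    have h2 : 0 ≤ ‖y - x‖ ^ 2 / t := by positivity
    linarith
  refine ⟨convex_univ, ?_⟩
  intro x₁ _ x₂ _ a b ha hb hab
  simp only [infConv, if_neg ht0, smul_eq_mul]
  refine le_of_forall_pos_le_add ?_
  intro ε hε
  obtain ⟨y₁, hy₁⟩ := exists_lt_of_ciInf_lt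
    (lt_add_of_pos_right (⨅ y : H, (u y + ‖y - x₁‖ ^ 2 / t)) hε)
  obtain ⟨y₂, hy₂⟩ := exists_lt_of_ciInf_lt
    (lt_add_of_pos_right (⨅ y : H, (u y + ‖y - x₂‖ ^ 2 / t)) hε)
  have step1 : (⨅ y : H, (u y + ‖y - (a • x₁ + b • x₂)‖ ^ 2 / t))
      + ‖a • x₁ + b • x₂‖ ^ 2 / (k - t)
      ≤ (u (a • y₁ + b • y₂) + ‖(a • y₁ + b • y₂) - (a • x₁ + b • x₂)‖ ^ 2 / t)
        + ‖a • x₁ + b • x₂‖ ^ 2 / (k - t) := by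
    gcongr
    exact ciInf_le (hbdd _) (a • y₁ + b • y₂)
  have hv : u (a • y₁ + b • y₂) + ‖a • y₁ + b • y₂‖ ^ 2 / k
      ≤ a * (u y₁ + ‖y₁‖ ^ 2 / k) + b * (u y₂ + ‖y₂‖ ^ 2 / k) := by
    have := hk.2 (Set.mem_univ y₁) (Set.mem_univ y₂) ha hb hab
    simpa using this
  have hlin : α • (a • y₁ + b • y₂) - (a • x₁ + b • x₂)
      = a • (α • y₁ - x₁) + b • (α • y₂ - x₂) := by
    module
  have hnorm : ‖α • (a • y₁ + b • y₂) - (a • x₁ + b • x₂)‖ ^ 2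
      ≤ a * ‖α • y₁ - x₁‖ ^ 2 + b * ‖α • y₂ - x₂‖ ^ 2 := by
    rw [hlin]
    exact sq_norm_combo a b _ _ ha hb hab
  have step2 : (u (a • y₁ + b • y₂) + ‖(a • y₁ + b • y₂) - (a • x₁ + b • x₂)‖ ^ 2 / t)
      + ‖a • x₁ + b • x₂‖ ^ 2 / (k - t)
      ≤ a * (u y₁ + ‖y₁ - x₁‖ ^ 2 / t + ‖x₁‖ ^ 2 / (k - t))
        + b * (u y₂ + ‖y₂ - x₂‖ ^ 2 / t + ‖x₂‖ ^ 2 / (k - t)) := by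
    rw [key, key, key]
    have h3 := mul_le_mul_of_nonneg_left hnorm hc
    linarith
  have step3 : a * (u y₁ + ‖y₁ - x₁‖ ^ 2 / t + ‖x₁‖ ^ 2 / (k - t))
        + b * (u y₂ + ‖y₂ - x₂‖ ^ 2 / t + ‖x₂‖ ^ 2 / (k - t))
      ≤ a * ((⨅ y : H, (u y + ‖y - x₁‖ ^ 2 / t)) + ‖x₁‖ ^ 2 / (k - t))
        + b * ((⨅ y : H, (u y + ‖y - x₂‖ ^ 2 / t)) + ‖x₂‖ ^ 2 / (k - t)) + ε := by
    have h1 := mul_le_mul_of_nonneg_left hy₁.le ha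
    have h2 := mul_le_mul_of_nonneg_left hy₂.le hb
    have h3 : a * ε + b * ε = ε := by rw [← add_mul, hab, one_mul]
    linarith
  linarith
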